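/- (Spectral density of the Type-2 Gumbel mixture.) For every b > 0 and every θ ∈ (0, π/2), setting u_b(θ) = √( (log tan θ)²/4 + 2b ), one has ∫_0^∞ [ 1/(2λ sin θ cos²θ) · φ(λ + log(tan θ)/(2λ)) ] · 2b λ^{−3} e^{−b/λ²} dλ = [ e^{−u_b(θ)} / (4 (sin θ cos θ)^{3/2}) ] · ( 1 − (log tan θ)²/(4 u_b(θ)²) ) · ( 1 + 1/u_b(θ) ). -/

import Mathlib

open MeasureTheory Filter Real Set

open Topology

/-- Standard normal density. -/
noncomputable def stdPdf (t : ℝ) : ℝ := (Real.sqrt (2 * Real.pi))⁻¹ * Real.exp (-(t ^ 2) / 2)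

/-- Standard normal CDF. -/
noncomputable def stdCdf (x : ℝ) : ℝ := ∫ t in Set.Iic x, stdPdf t

lemma stdPdf_cont : Continuous stdPdf := by
  unfold stdPdf; fun_prop

lemma stdPdf_pos (t : ℝ) : 0 < stdPdf t := by
  unfold stdPdf
  positivity

lemma stdPdf_integrable : Integrable stdPdf := by
  have h := integrable_exp_neg_mul_sq (b := (1/2 : ℝ)) (by norm_num)
  have := h.const_mul (Real.sqrt (2 * Real.pi))⁻¹
  refine this.congr ?_
  filter_upwards with t
  unfold stdPdf
  ring_nf

lemma stdPdf_integral : ∫ t, stdPdf t = 1 := by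
  have h : ∫ t : ℝ, Real.exp (-(1/2 : ℝ) * t ^ 2) = Real.sqrt (π / (1/2)) :=
    integral_gaussian (1/2)
  have h2 : ∫ t : ℝ, stdPdf t = (Real.sqrt (2 * Real.pi))⁻¹ * ∫ t : ℝ, Real.exp (-(1/2 : ℝ) * t ^ 2) := by
    rw [← integral_const_mul]
    congr 1 with t
    unfold stdPdf; ring_nf
  rw [h2, h]
  rw [show π / (1/2 : ℝ) = 2 * π by ring]
  rw [inv_mul_cancel₀]
  positivity

lemma hasDerivAt_stdCdf (x : ℝ) : HasDerivAt stdCdf (stdPdf x) x := by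
  have key : ∀ y : ℝ, stdCdf y = stdCdf 0 + ∫ t in (0:ℝ)..y, stdPdf t := by
    intro y
    have := intervalIntegral.integral_Iic_sub_Iic (stdPdf_integrable.integrableOn (s := Iic 0))
      (stdPdf_integrable.integrableOn (s := Iic y))
    unfold stdCdf
    rw [← this]; ring
  have hd : HasDerivAt (fun y => ∫ t in (0:ℝ)..y, stdPdf t) (stdPdf x) x :=
    intervalIntegral.integral_hasDerivAt_right
      (stdPdf_integrable.intervalIntegrable)
      (stdPdf_cont.stronglyMeasurableAtFilter _ _)
      stdPdf_cont.continuousAt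
  have := hd.const_add (stdCdf 0)
  simpa [← key] using this

lemma stdCdf_tendsto_atTop : Tendsto stdCdf atTop (𝓝 1) := by
  have h := tendsto_setIntegral_of_monotone (μ := volume) (f := stdPdf)
    (s := fun x : ℝ => Iic x) (fun i => measurableSet_Iic)
    (fun i j hij => Iic_subset_Iic.2 hij)
    (by rw [iUnion_Iic]; simpa using stdPdf_integrable.integrableOn (s := univ))
  rw [iUnion_Iic] at h
  simp [stdPdf_integral] at h; exact h

lemma stdCdf_tendsto_atBot : Tendsto stdCdf atBot (𝓝 0) := by
  have h := tendsto_setIntegral_of_antitone (μ := volume) (f := stdPdf)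
    (s := fun x : ℝ => Iic (-x)) (fun i => measurableSet_Iic)
    (fun i j hij => Iic_subset_Iic.2 (by linarith))
    ⟨0, stdPdf_integrable.integrableOn⟩
  have hempty : ⋂ x : ℝ, Iic (-x) = (∅ : Set ℝ) := by
    ext y
    simp only [mem_iInter, mem_Iic, mem_empty_iff_false, iff_false, not_forall, not_le]
    exact ⟨-(y - 1), by linarith⟩
  rw [hempty] at h
  simp only [setIntegral_empty] at h
  have : Tendsto (fun x : ℝ => stdCdf (-x)) atTop (𝓝 0) := h
  have h2 := this.comp tendsto_neg_atBot_atTop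
  refine h2.congr fun x => ?_
  simp [Function.comp]

lemma tendsto_mul_exp_aux {a : ℝ} (ha : 0 < a) :
    Tendsto (fun t : ℝ => t * Real.exp (-a * t ^ 2)) atTop (𝓝 0) := by
  have h0 : Tendsto (fun x : ℝ => Real.exp (-(1/2) * x)) atTop (𝓝 0) := by
    have : Tendsto (fun x : ℝ => (1/2 : ℝ) * x) atTop atTop :=
      Tendsto.const_mul_atTop (by norm_num) tendsto_id
    have := Real.tendsto_exp_neg_atTop_nhds_zero.comp this
    refine this.congr fun x => ?_
    simp [Function.comp, neg_mul]
  have h := (rpow_mul_exp_neg_mul_sq_isLittleO_exp_neg ha 1).trans_tendsto h0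
  refine h.congr' ?_
  filter_upwards [eventually_ge_atTop (0:ℝ)] with x hx
  rw [Real.rpow_one]

lemma gumbel_aux (u K : ℝ) (hu : 0 < u) (hK : 0 ≤ K) :
    ∫ l in Ioi (0:ℝ), K / l ^ 4 * Real.exp (-l ^ 2 / 2 - u ^ 2 / 2 / l ^ 2)
      = K * Real.sqrt (2 * π) * Real.exp (-u) * (1 + 1 / u) / (2 * u ^ 2) := by
  set Cp : ℝ := K * Real.sqrt (2 * π) * Real.exp (-u) * (1 + 1 / u) / (2 * u ^ 2) with hCp
  set Cm : ℝ := K * Real.sqrt (2 * π) * Real.exp u * (1 - 1 / u) / (2 * u ^ 2) with hCm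
  set F : ℝ → ℝ := fun l =>
    if l ≤ 0 then Cm else
      K / u ^ 2 * l⁻¹ * Real.exp (-l ^ 2 / 2 - u ^ 2 / 2 / l ^ 2)
        + Cp * stdCdf (l - u / l) + Cm * stdCdf (l + u / l) with hF
  have hsq : (0:ℝ) < Real.sqrt (2 * π) := Real.sqrt_pos.2 (by positivity)
  -- derivative
  have hderiv : ∀ l ∈ Ioi (0:ℝ),
      HasDerivAt F (K / l ^ 4 * Real.exp (-l ^ 2 / 2 - u ^ 2 / 2 / l ^ 2)) l := by
    intro l hl
    have hl0 : 0 < l := hl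
    have hne : l ≠ 0 := hl0.ne'
    have hEq : F =ᶠ[𝓝 l] fun x =>
        K / u ^ 2 * x⁻¹ * Real.exp (-x ^ 2 / 2 - u ^ 2 / 2 / x ^ 2)
          + Cp * stdCdf (x - u / x) + Cm * stdCdf (x + u / x) := by
      filter_upwards [eventually_gt_nhds hl0] with x hx
      rw [hF]; simp only [not_le.2 hx, if_false]
    -- build derivative
    have hsqder : HasDerivAt (fun x : ℝ => x ^ 2) (2 * l) l := by
      simpa using hasDerivAt_pow 2 l
    have hE : HasDerivAt (fun x : ℝ => -x ^ 2 / 2 - u ^ 2 / 2 / x ^ 2)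
        (-l + u ^ 2 / l ^ 3) l := by
      have h1 : HasDerivAt (fun x : ℝ => -x ^ 2 / 2) (-l) l := by
        have := (hsqder.neg).div_const 2
        simpa using this.congr_deriv (by ring)
      have h2 : HasDerivAt (fun x : ℝ => u ^ 2 / 2 / x ^ 2)
          (-(u ^ 2 / l ^ 3)) l := by
        have hinv : HasDerivAt (fun x : ℝ => (x ^ 2)⁻¹) (-(2 * l) / (l ^ 2) ^ 2) l :=
          hsqder.inv (pow_ne_zero 2 hne)
        have := hinv.const_mul (u ^ 2 / 2)
        have heq : (fun x : ℝ => u ^ 2 / 2 * (x ^ 2)⁻¹) = fun x : ℝ => u ^ 2 / 2 / x ^ 2 := by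
          funext x; ring
        rw [heq] at this
        refine this.congr_deriv ?_
        field_simp
      exact (h1.sub h2).congr_deriv (by ring)
    have hexp : HasDerivAt (fun x : ℝ => Real.exp (-x ^ 2 / 2 - u ^ 2 / 2 / x ^ 2))
        (Real.exp (-l ^ 2 / 2 - u ^ 2 / 2 / l ^ 2) * (-l + u ^ 2 / l ^ 3)) l := hE.exp
    have hT1 : HasDerivAt (fun x : ℝ => K / u ^ 2 * x⁻¹ *
        Real.exp (-x ^ 2 / 2 - u ^ 2 / 2 / x ^ 2))
        (K / u ^ 2 * (-(l ^ 2)⁻¹) * Real.exp (-l ^ 2 / 2 - u ^ 2 / 2 / l ^ 2)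
          + K / u ^ 2 * l⁻¹ *
            (Real.exp (-l ^ 2 / 2 - u ^ 2 / 2 / l ^ 2) * (-l + u ^ 2 / l ^ 3))) l := by
      have hinv : HasDerivAt (fun x : ℝ => K / u ^ 2 * x⁻¹) (K / u ^ 2 * (-(l ^ 2)⁻¹)) l := by
        have := (hasDerivAt_inv hne).const_mul (K / u ^ 2)
        simpa [pow_two] using this
      exact hinv.mul hexp
    have hin1 : HasDerivAt (fun x : ℝ => x - u / x) (1 + u / l ^ 2) l := by
      have := (hasDerivAt_id l).sub ((hasDerivAt_inv hne).const_mul u)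
      simp only [Pi.sub_def, id_eq] at this
      have heq : (fun x : ℝ => x - u * x⁻¹) = fun x : ℝ => x - u / x := by
        funext x; ring
      rw [heq] at this
      refine this.congr_deriv ?_
      field_simp
      ring
    have hin2 : HasDerivAt (fun x : ℝ => x + u / x) (1 - u / l ^ 2) l := by
      have := (hasDerivAt_id l).add ((hasDerivAt_inv hne).const_mul u)
      simp only [Pi.add_def, id_eq] at this
      have heq : (fun x : ℝ => x + u * x⁻¹) = fun x : ℝ => x + u / x := by
        funext x; ring
      rw [heq] at this
      refine this.congr_deriv ?_
      field_simp
      ring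
    have hT2 : HasDerivAt (fun x : ℝ => Cp * stdCdf (x - u / x))
        (Cp * (stdPdf (l - u / l) * (1 + u / l ^ 2))) l :=
      (HasDerivAt.comp l (hasDerivAt_stdCdf (l - u / l)) hin1 (h₂ := stdCdf)).const_mul Cp
    have hT3 : HasDerivAt (fun x : ℝ => Cm * stdCdf (x + u / x))
        (Cm * (stdPdf (l + u / l) * (1 - u / l ^ 2))) l :=
      (HasDerivAt.comp l (hasDerivAt_stdCdf (l + u / l)) hin2 (h₂ := stdCdf)).const_mul Cm
    have hsum := (hT1.add hT2).add hT3
    refine HasDerivAt.congr_of_eventuallyEq ?_ hEq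
    convert hsum using 1
    · rfl
    -- now an algebraic identity
    have hpdf1 : stdPdf (l - u / l) =
        (Real.sqrt (2 * π))⁻¹ * (Real.exp u * Real.exp (-l ^ 2 / 2 - u ^ 2 / 2 / l ^ 2)) := by
      rw [stdPdf, ← Real.exp_add]
      congr 1
      field_simp
      ring
    have hpdf2 : stdPdf (l + u / l) =
        (Real.sqrt (2 * π))⁻¹ * (Real.exp (-u) * Real.exp (-l ^ 2 / 2 - u ^ 2 / 2 / l ^ 2)) := by
      rw [stdPdf, ← Real.exp_add]
      congr 1
      field_simp
      ring
    rw [hpdf1, hpdf2, hCp, hCm, Real.exp_neg]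
    have heu : Real.exp u ≠ 0 := (Real.exp_pos u).ne'
    field_simp
    ring
  have g'nonneg : ∀ l ∈ Ioi (0:ℝ),
      0 ≤ K / l ^ 4 * Real.exp (-l ^ 2 / 2 - u ^ 2 / 2 / l ^ 2) := by
    intro l hl
    have : (0:ℝ) < l := hl
    positivity
  -- continuity at 0 from the right
  have hcont : ContinuousWithinAt F (Ici 0) 0 := by
    have hF0 : F 0 = Cm := by rw [hF]; simp
    rw [ContinuousWithinAt, hF0, ← Ioi_insert, nhdsWithin_insert, tendsto_sup]
    constructor
    · simpa [hF0] using tendsto_pure_nhds F 0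
    · have hEq : ∀ᶠ x in 𝓝[>] (0:ℝ), F x =
          K / u ^ 2 * x⁻¹ * Real.exp (-x ^ 2 / 2 - u ^ 2 / 2 / x ^ 2)
            + Cp * stdCdf (x - u / x) + Cm * stdCdf (x + u / x) := by
        filter_upwards [self_mem_nhdsWithin] with x (hx : 0 < x)
        rw [hF]; simp only [not_le.2 hx, if_false]
      rw [tendsto_congr' hEq]
      have hT1 : Tendsto (fun x : ℝ => K / u ^ 2 * x⁻¹ *
          Real.exp (-x ^ 2 / 2 - u ^ 2 / 2 / x ^ 2)) (𝓝[>] (0:ℝ)) (𝓝 0) := by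
        apply squeeze_zero_norm' (a := fun x : ℝ =>
          |K / u ^ 2| * (x⁻¹ * Real.exp (-(u ^ 2 / 2) * (x⁻¹) ^ 2)))
        · filter_upwards [self_mem_nhdsWithin] with x (hx : 0 < x)
          have h1 : Real.exp (-x ^ 2 / 2 - u ^ 2 / 2 / x ^ 2)
              ≤ Real.exp (-(u ^ 2 / 2) * (x⁻¹) ^ 2) := by
            apply Real.exp_le_exp.2
            have : u ^ 2 / 2 / x ^ 2 = u ^ 2 / 2 * (x⁻¹) ^ 2 := by
              field_simp
            rw [this]
            nlinarith [sq_nonneg x]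
          have hxi : 0 < x⁻¹ := inv_pos.2 hx
          calc ‖K / u ^ 2 * x⁻¹ * Real.exp (-x ^ 2 / 2 - u ^ 2 / 2 / x ^ 2)‖
              = |K / u ^ 2| * (x⁻¹ * Real.exp (-x ^ 2 / 2 - u ^ 2 / 2 / x ^ 2)) := by
                rw [Real.norm_eq_abs, abs_mul, abs_mul, abs_of_pos hxi,
                  abs_of_pos (Real.exp_pos _)]
                ring
            _ ≤ |K / u ^ 2| * (x⁻¹ * Real.exp (-(u ^ 2 / 2) * (x⁻¹) ^ 2)) := by
                apply mul_le_mul_of_nonneg_left _ (abs_nonneg _)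
                exact mul_le_mul_of_nonneg_left h1 hxi.le
        · have hcomp := (tendsto_mul_exp_aux (a := u ^ 2 / 2) (by positivity)).comp
            tendsto_inv_nhdsGT_zero
          have := hcomp.const_mul (|K / u ^ 2|)
          simpa using this
      have hT2 : Tendsto (fun x : ℝ => Cp * stdCdf (x - u / x)) (𝓝[>] (0:ℝ)) (𝓝 (Cp * 0)) := by
        apply Tendsto.const_mul
        apply stdCdf_tendsto_atBot.comp
        have h1 : Tendsto (fun x : ℝ => x) (𝓝[>] (0:ℝ)) (𝓝 0) :=
          tendsto_id.mono_left nhdsWithin_le_nhds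
        have h2 : Tendsto (fun x : ℝ => -(u * x⁻¹)) (𝓝[>] (0:ℝ)) atBot := by
          apply tendsto_neg_atTop_atBot.comp
          exact Tendsto.const_mul_atTop hu tendsto_inv_nhdsGT_zero
        have := h1.add_atBot h2
        refine this.congr fun x => ?_
        simp only [id_eq, div_eq_mul_inv]; ring
      have hT3 : Tendsto (fun x : ℝ => Cm * stdCdf (x + u / x)) (𝓝[>] (0:ℝ)) (𝓝 (Cm * 1)) := by
        apply Tendsto.const_mul
        apply stdCdf_tendsto_atTop.comp
        have h1 : Tendsto (fun x : ℝ => x) (𝓝[>] (0:ℝ)) (𝓝 0) :=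
          tendsto_id.mono_left nhdsWithin_le_nhds
        have h2 : Tendsto (fun x : ℝ => u * x⁻¹) (𝓝[>] (0:ℝ)) atTop :=
          Tendsto.const_mul_atTop hu tendsto_inv_nhdsGT_zero
        have := h1.add_atTop h2
        refine this.congr fun x => ?_
        simp only [id_eq, div_eq_mul_inv]
      have := (hT1.add hT2).add hT3
      simpa using this
  -- limit at infinity
  have htop : Tendsto F atTop (𝓝 (Cp + Cm)) := by
    have hEq : ∀ᶠ x in atTop, F x =
        K / u ^ 2 * x⁻¹ * Real.exp (-x ^ 2 / 2 - u ^ 2 / 2 / x ^ 2)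
          + Cp * stdCdf (x - u / x) + Cm * stdCdf (x + u / x) := by
      filter_upwards [eventually_gt_atTop (0:ℝ)] with x hx
      rw [hF]; simp only [not_le.2 hx, if_false]
    rw [tendsto_congr' hEq]
    have hT1 : Tendsto (fun x : ℝ => K / u ^ 2 * x⁻¹ *
        Real.exp (-x ^ 2 / 2 - u ^ 2 / 2 / x ^ 2)) atTop (𝓝 0) := by
      apply squeeze_zero_norm' (a := fun x : ℝ => |K / u ^ 2| * x⁻¹)
      · filter_upwards [eventually_gt_atTop (0:ℝ)] with x hx
        have hxi : 0 < x⁻¹ := inv_pos.2 hx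
        have h1 : Real.exp (-x ^ 2 / 2 - u ^ 2 / 2 / x ^ 2) ≤ 1 := by
          rw [← Real.exp_zero]
          apply Real.exp_le_exp.2
          have h2 : 0 ≤ u ^ 2 / 2 / x ^ 2 := by positivity
          nlinarith [sq_nonneg x]
        rw [Real.norm_eq_abs, abs_mul, abs_mul, abs_of_pos hxi, abs_of_pos (Real.exp_pos _)]
        calc |K / u ^ 2| * x⁻¹ * Real.exp (-x ^ 2 / 2 - u ^ 2 / 2 / x ^ 2)
            ≤ |K / u ^ 2| * x⁻¹ * 1 := by
              apply mul_le_mul_of_nonneg_left h1 (by positivity)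
          _ = |K / u ^ 2| * x⁻¹ := by ring
      · simpa using tendsto_inv_atTop_zero.const_mul (|K / u ^ 2|)
    have hT2 : Tendsto (fun x : ℝ => Cp * stdCdf (x - u / x)) atTop (𝓝 (Cp * 1)) := by
      apply Tendsto.const_mul
      apply stdCdf_tendsto_atTop.comp
      have h2 : Tendsto (fun x : ℝ => -(u / x)) atTop (𝓝 0) := by
        simpa using (tendsto_const_nhds (x := u)).div_atTop tendsto_id |>.neg
      have := tendsto_id.atTop_add h2
      refine this.congr fun x => ?_
      simp only [id_eq]; ring
    have hT3 : Tendsto (fun x : ℝ => Cm * stdCdf (x + u / x)) atTop (𝓝 (Cm * 1)) := by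
      apply Tendsto.const_mul
      apply stdCdf_tendsto_atTop.comp
      have h2 : Tendsto (fun x : ℝ => u / x) atTop (𝓝 0) :=
        (tendsto_const_nhds (x := u)).div_atTop tendsto_id
      have := tendsto_id.atTop_add h2
      refine this.congr fun x => ?_
      simp only [id_eq]
    have := (hT1.add hT2).add hT3
    simpa using this
  have key := integral_Ioi_of_hasDerivAt_of_nonneg hcont hderiv g'nonneg htop
  rw [key]
  have hF0 : F 0 = Cm := by rw [hF]; simp
  rw [hF0]
  ring

/-- **Spectral density of the Type-2 Gumbel mixture.** -/
theorem stmt15 (b : ℝ) (hb : 0 < b) (θ : ℝ) (hθ : θ ∈ Set.Ioo 0 (Real.pi / 2)) :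
    ∫ l in Set.Ioi (0 : ℝ),
        (1 / (2 * l * Real.sin θ * Real.cos θ ^ 2)
            * stdPdf (l + Real.log (Real.tan θ) / (2 * l)))
          * (2 * b * l ^ (-3 : ℤ) * Real.exp (-b / l ^ 2))
      = Real.exp (-Real.sqrt ((Real.log (Real.tan θ)) ^ 2 / 4 + 2 * b))
            / (4 * (Real.sin θ * Real.cos θ) ^ ((3 : ℝ) / 2))
          * (1 - (Real.log (Real.tan θ)) ^ 2
              / (4 * Real.sqrt ((Real.log (Real.tan θ)) ^ 2 / 4 + 2 * b) ^ 2))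
          * (1 + 1 / Real.sqrt ((Real.log (Real.tan θ)) ^ 2 / 4 + 2 * b)) := by
  obtain ⟨hθ0, hθ1⟩ := hθ
  have hpi := Real.pi_pos
  have hs : 0 < Real.sin θ := Real.sin_pos_of_pos_of_lt_pi hθ0 (by linarith)
  have hc : 0 < Real.cos θ := Real.cos_pos_of_mem_Ioo ⟨by linarith, hθ1⟩
  have htan : 0 < Real.tan θ := by rw [Real.tan_eq_sin_div_cos]; positivity
  set m := Real.log (Real.tan θ) with hm
  set u := Real.sqrt (m ^ 2 / 4 + 2 * b) with hudef
  have hu : 0 < u := Real.sqrt_pos.2 (by positivity)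
  have hu2 : u ^ 2 = m ^ 2 / 4 + 2 * b := Real.sq_sqrt (by positivity)
  have hsq : 0 < Real.sqrt (2 * π) := Real.sqrt_pos.2 (by positivity)
  set K := b * Real.exp (-m / 2) / (Real.sin θ * Real.cos θ ^ 2 * Real.sqrt (2 * π)) with hK
  have hKpos : 0 < K :=
    div_pos (mul_pos hb (Real.exp_pos _)) (mul_pos (mul_pos hs (pow_pos hc 2)) hsq)
  have hcongr : ∫ l in Set.Ioi (0 : ℝ),
        (1 / (2 * l * Real.sin θ * Real.cos θ ^ 2) * stdPdf (l + m / (2 * l)))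
          * (2 * b * l ^ (-3 : ℤ) * Real.exp (-b / l ^ 2))
      = ∫ l in Ioi (0:ℝ), K / l ^ 4 * Real.exp (-l ^ 2 / 2 - u ^ 2 / 2 / l ^ 2) := by
    apply setIntegral_congr_fun measurableSet_Ioi
    intro l hl
    have hl0 : (0:ℝ) < l := hl
    have hne : l ≠ 0 := hl0.ne'
    have hz : l ^ (-3 : ℤ) = (l ^ 3)⁻¹ := by
      rw [zpow_neg]
      norm_cast
    have hexp : Real.exp (-((l + m / (2 * l)) ^ 2) / 2) * Real.exp (-b / l ^ 2)
        = Real.exp (-m / 2) * Real.exp (-l ^ 2 / 2 - u ^ 2 / 2 / l ^ 2) := by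
      rw [← Real.exp_add, ← Real.exp_add]
      congr 1
      rw [hu2]
      field_simp
      ring
    calc (1 / (2 * l * Real.sin θ * Real.cos θ ^ 2) * stdPdf (l + m / (2 * l)))
          * (2 * b * l ^ (-3 : ℤ) * Real.exp (-b / l ^ 2))
        = b / (Real.sin θ * Real.cos θ ^ 2 * Real.sqrt (2 * π) * l ^ 4) *
            (Real.exp (-((l + m / (2 * l)) ^ 2) / 2) * Real.exp (-b / l ^ 2)) := by
          rw [stdPdf, hz]
          field_simp
      _ = b / (Real.sin θ * Real.cos θ ^ 2 * Real.sqrt (2 * π) * l ^ 4) *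
            (Real.exp (-m / 2) * Real.exp (-l ^ 2 / 2 - u ^ 2 / 2 / l ^ 2)) := by
          rw [hexp]
      _ = K / l ^ 4 * Real.exp (-l ^ 2 / 2 - u ^ 2 / 2 / l ^ 2) := by
          rw [hK]
          field_simp
  rw [hcongr, gumbel_aux u K hu hKpos.le]
  -- final algebra
  have hm2 : m = Real.log (Real.sin θ) - Real.log (Real.cos θ) := by
    rw [hm, Real.tan_eq_sin_div_cos, Real.log_div hs.ne' hc.ne']
  have expid : ∀ p q : ℝ, Real.exp ((p + q) * ((3:ℝ)/2))
      = Real.exp p * Real.exp q ^ 2 * Real.exp ((p - q)/2) := by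
    intro p q
    rw [sq, ← Real.exp_add, ← Real.exp_add, ← Real.exp_add, Real.exp_eq_exp]
    ring
  have hX : (Real.sin θ * Real.cos θ) ^ ((3:ℝ)/2)
      = Real.sin θ * Real.cos θ ^ 2 * Real.exp (m / 2) := by
    rw [Real.rpow_def_of_pos (mul_pos hs hc), Real.log_mul hs.ne' hc.ne', hm2,
      expid, Real.exp_log hs, Real.exp_log hc]
  rw [hX, hK]
  rw [show m ^ 2 = 4 * u ^ 2 - 8 * b by linarith]
  rw [show (-m / 2 : ℝ) = -(m / 2) by ring, Real.exp_neg]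
  have he : Real.exp (m / 2) ≠ 0 := (Real.exp_pos _).ne'
  field_simp
  ring
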